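/- arXiv:0908.2122 — 3 statements merged into one kernel-verified Lean document; each statement's English description precedes it below -/
import Mathlib

section
/- Let G be a loopless graph with n vertices and κ connected components, and let λ be a real number with λ < 0. Then P_G(λ) ≠ 0 and the sign of P_G(λ) is (−1)^n. -/
open Finset SimpleGraph

universe u

section lemmas

section contract
variable {V : Type*} {u v : V}

-- Pairing lemma: summing over a powerset of a set containing `c`,
-- the alternating sum of any function of `insert c A` vanishes.
lemma wj_sum_insert_fixed {β : Type*} [DecidableEq β] {F : Finset β} {c : β} (hc : c ∈ F)
    (h : Finset β → ℝ) :
    ∑ A ∈ F.powerset, (-1 : ℝ) ^ A.card * h (insert c A) = 0 := by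
  have hF : F = insert c (F.erase c) := (Finset.insert_erase hc).symm
  rw [hF, Finset.sum_powerset_insert (Finset.notMem_erase c F)]
  have key : ∀ A ∈ (F.erase c).powerset,
      (-1:ℝ) ^ (insert c A).card * h (insert c (insert c A))
        = -((-1:ℝ) ^ A.card * h (insert c A)) := by
    intro A hA
    have hcA : c ∉ A := fun hx => Finset.notMem_erase c F (Finset.mem_powerset.mp hA hx)
    rw [Finset.card_insert_of_notMem hcA, Finset.insert_idem, pow_succ]
    ring
  rw [Finset.sum_congr rfl key]
  simp

-- Lemma B: collapse along a map
lemma wj_collapse {α β : Type*} [DecidableEq α] [DecidableEq β] (m : α → β) :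
    ∀ (E : Finset α) (h : Finset β → ℝ),
      ∑ B ∈ E.powerset, (-1:ℝ) ^ B.card * h (B.image m)
        = ∑ A ∈ (E.image m).powerset, (-1:ℝ) ^ A.card * h A := by
  intro E
  induction E using Finset.induction_on with
  | empty => simp
  | @insert a E ha ih =>
    intro h
    rw [Finset.sum_powerset_insert ha, Finset.image_insert]
    have step : ∀ B ∈ E.powerset,
        (-1:ℝ) ^ (insert a B).card * h ((insert a B).image m)
          = -((-1:ℝ) ^ B.card * h (insert (m a) (B.image m))) := by
      intro B hB
      have haB : a ∉ B := fun hx => ha (Finset.mem_powerset.mp hB hx)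
      rw [Finset.card_insert_of_notMem haB, Finset.image_insert, pow_succ]
      ring
    rw [Finset.sum_congr rfl step, Finset.sum_neg_distrib,
      ih h, ih (fun A => h (insert (m a) A))]
    by_cases hma : m a ∈ E.image m
    · rw [Finset.insert_eq_self.mpr hma, wj_sum_insert_fixed hma h]
      ring
    · rw [Finset.sum_powerset_insert hma]
      have step2 : ∀ A ∈ (E.image m).powerset,
          (-1:ℝ) ^ (insert (m a) A).card * h (insert (m a) A)
            = -((-1:ℝ) ^ A.card * h (insert (m a) A)) := by
        intro A hA
        have : m a ∉ A := fun hx => hma (Finset.mem_powerset.mp hA hx)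
        rw [Finset.card_insert_of_notMem this, pow_succ]
        ring
      rw [Finset.sum_congr rfl step2, Finset.sum_neg_distrib]

noncomputable def wjr (huv : u ≠ v) (x : V) : {x : V // x ≠ v} :=
  letI := Classical.dec (x = v)
  if h : x = v then ⟨u, huv⟩ else ⟨x, h⟩

lemma wjr_pos (huv : u ≠ v) {x : V} (hx : x = v) : wjr huv x = ⟨u, huv⟩ := by
  rw [wjr]; exact dif_pos hx

lemma wjr_neg (huv : u ≠ v) {x : V} (hx : x ≠ v) : wjr huv x = ⟨x, hx⟩ := by
  rw [wjr]; exact dif_neg hx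

lemma wjr_coe (huv : u ≠ v) (a : {x : V // x ≠ v}) : wjr huv (a : V) = a := by
  rw [wjr_neg huv a.2]

lemma wjr_eq_uv (huv : u ≠ v) : wjr huv u = wjr huv v := by
  rw [wjr_pos huv rfl, wjr_neg huv huv]

lemma wj_fib (huv : u ≠ v) (S : Set (Sym2 V)) (x : V) :
    (fromEdgeSet (insert s(u,v) S)).Reachable x ((wjr huv x : {x : V // x ≠ v}) : V) := by
  by_cases hx : x = v
  · rw [wjr_pos huv hx]
    have hadj : (fromEdgeSet (insert s(u,v) S)).Adj x u := by
      rw [fromEdgeSet_adj]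
      constructor
      · rw [hx, Sym2.eq_swap]; exact Set.mem_insert _ _
      · rw [hx]; exact fun h => huv h.symm
    exact hadj.reachable
  · rw [wjr_neg huv hx]

lemma wj_fwd (huv : u ≠ v) (S : Set (Sym2 V)) {x y : V}
    (hr : (fromEdgeSet (insert s(u,v) S)).Reachable x y) :
    (fromEdgeSet (Sym2.map (wjr huv) '' S)).Reachable (wjr huv x) (wjr huv y) := by
  obtain ⟨w⟩ := hr
  induction w with
  | nil => exact Reachable.refl _
  | @cons x b y h p ih =>
    refine Reachable.trans ?_ ih
    rw [fromEdgeSet_adj] at h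
    obtain ⟨hm, hxb⟩ := h
    by_cases heq : wjr huv x = wjr huv b
    · rw [heq]
    · rcases Set.mem_insert_iff.mp hm with he | hS
      · exfalso
        rcases Sym2.eq_iff.mp he with ⟨rfl, rfl⟩ | ⟨rfl, rfl⟩
        · exact heq (wjr_eq_uv huv)
        · exact heq (wjr_eq_uv huv).symm
      · refine Adj.reachable ?_
        rw [fromEdgeSet_adj]
        exact ⟨⟨s(x,b), hS, by simp [Sym2.map_pair_eq]⟩, heq⟩

lemma wj_bwd (huv : u ≠ v) (S : Set (Sym2 V)) {a b : {x : V // x ≠ v}}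
    (hr : (fromEdgeSet (Sym2.map (wjr huv) '' S)).Reachable a b) :
    (fromEdgeSet (insert s(u,v) S)).Reachable (a : V) (b : V) := by
  obtain ⟨w⟩ := hr
  induction w with
  | nil => exact Reachable.refl _
  | @cons a c y h p ih =>
    refine Reachable.trans ?_ ih
    rw [fromEdgeSet_adj] at h
    obtain ⟨⟨z, hzS, hz⟩, hac⟩ := h
    induction z using Sym2.ind with
    | _ p q =>
      rw [Sym2.map_pair_eq, Sym2.eq_iff] at hz
      have hpq : p ≠ q := by
        rintro rfl
        rcases hz with ⟨h1, h2⟩ | ⟨h1, h2⟩ <;> exact hac (h1 ▸ h2 ▸ rfl)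
      have hadj : (fromEdgeSet (insert s(u,v) S)).Adj p q := by
        rw [fromEdgeSet_adj]
        exact ⟨Set.mem_insert_of_mem _ hzS, hpq⟩
      have lift : ∀ (x : V) (d : {x : V // x ≠ v}), wjr huv x = d →
          (fromEdgeSet (insert s(u,v) S)).Reachable (d : V) x := by
        intro x d hd
        have := wj_fib huv S x
        rw [hd] at this
        exact this.symm
      rcases hz with ⟨h1, h2⟩ | ⟨h1, h2⟩
      · exact ((lift p a h1).trans hadj.reachable).trans (wj_fib huv S q |>.trans (by rw [h2]))
      · exact ((lift q a h2).trans hadj.symm.reachable).trans (wj_fib huv S p |>.trans (by rw [h1]))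

lemma wj_contract_card (huv : u ≠ v) (S : Set (Sym2 V)) :
    Nat.card (fromEdgeSet (insert s(u,v) S)).ConnectedComponent
      = Nat.card (fromEdgeSet (Sym2.map (wjr huv) '' S)).ConnectedComponent := by
  set G1 := fromEdgeSet (insert s(u,v) S)
  set G2 := fromEdgeSet (Sym2.map (wjr huv) '' S)
  have hΦ : ∀ (x y : V) (p : G1.Walk x y), p.IsPath →
      G2.connectedComponentMk (wjr huv x) = G2.connectedComponentMk (wjr huv y) :=
    fun x y p _ => ConnectedComponent.sound (wj_fwd huv S ⟨p⟩)
  let Φ : G1.ConnectedComponent → G2.ConnectedComponent :=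
    ConnectedComponent.lift (fun x => G2.connectedComponentMk (wjr huv x)) hΦ
  have hbij : Function.Bijective Φ := by
    constructor
    · intro c d
      refine ConnectedComponent.ind₂ (fun x y hxy => ?_) c d
      have hre : G2.Reachable (wjr huv x) (wjr huv y) := ConnectedComponent.exact hxy
      have := wj_bwd huv S hre
      exact ConnectedComponent.sound
        (((wj_fib huv S x).trans this).trans (wj_fib huv S y).symm)
    · intro c
      refine ConnectedComponent.ind (fun a => ?_) c
      exact ⟨G1.connectedComponentMk (a : V), by simp [Φ, wjr_coe huv a]⟩
  exact Nat.card_congr (Equiv.ofBijective Φ hbij)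


lemma wjr_sym2_eq {u v : V} (huv : u ≠ v) {p q : V}
    (h : wjr huv p = wjr huv q) (hpq : p ≠ q) : s(p,q) = s(u,v) := by
  by_cases hp : p = v <;> by_cases hq : q = v
  · exact absurd (hp.trans hq.symm) hpq
  · rw [wjr_pos huv hp, wjr_neg huv hq] at h
    have : u = q := congrArg Subtype.val h
    rw [hp, ← this, Sym2.eq_swap]
  · rw [wjr_neg huv hp, wjr_pos huv hq] at h
    have : p = u := congrArg Subtype.val h
    rw [hq, this]
  · rw [wjr_neg huv hp, wjr_neg huv hq] at h
    exact absurd (congrArg Subtype.val h) hpq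

end contract

lemma wj_card_cc_bot {V : Type*} [Fintype V] :
    Nat.card (⊥ : SimpleGraph V).ConnectedComponent = Fintype.card V := by
  have e : (⊥ : SimpleGraph V).ConnectedComponent ≃ V := by
    refine Equiv.ofBijective
      (ConnectedComponent.lift id (fun x y p hp => ?_)) ⟨?_, ?_⟩
    · exact reachable_bot.mp ⟨p⟩
    · intro c d
      refine ConnectedComponent.ind₂ (fun x y hxy => ?_) c d
      exact ConnectedComponent.sound (reachable_bot.mpr hxy)
    · intro x
      exact ⟨(⊥ : SimpleGraph V).connectedComponentMk x, rfl⟩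
  rw [Nat.card_congr e, Nat.card_eq_fintype_card]

lemma wj_base {V : Type u} [Fintype V] (lam : ℝ) (hlam : lam < 0) :
    0 < (-1:ℝ) ^ Fintype.card V *
      ∑ A ∈ (∅ : Finset (Sym2 V)).powerset, (-1:ℝ) ^ A.card *
        lam ^ Nat.card (fromEdgeSet (↑A : Set (Sym2 V))).ConnectedComponent := by
  rw [Finset.powerset_empty, Finset.sum_singleton]
  simp only [Finset.card_empty, pow_zero, one_mul, Finset.coe_empty, fromEdgeSet_empty,
    wj_card_cc_bot]
  rw [← neg_pow]
  exact pow_pos (by linarith) _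

lemma wj_key (lam : ℝ) (hlam : lam < 0) :
    ∀ (N : ℕ) (V : Type u) [Fintype V] (E : Finset (Sym2 V)), E.card ≤ N →
      (∀ e ∈ E, ¬ e.IsDiag) →
      0 < (-1:ℝ) ^ Fintype.card V *
        ∑ A ∈ E.powerset, (-1:ℝ) ^ A.card *
          lam ^ Nat.card (fromEdgeSet (↑A : Set (Sym2 V))).ConnectedComponent := by
  intro N
  induction N with
  | zero =>
    intro V _ E hE _
    rw [Nat.le_zero, Finset.card_eq_zero] at hE
    subst hE
    exact wj_base lam hlam
  | succ N ih =>
    intro V _ E hE hdiag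
    classical
    rcases Finset.eq_empty_or_nonempty E with rfl | ⟨e, he⟩
    · exact wj_base lam hlam
    obtain ⟨⟨p₀, q₀⟩, rfl⟩ := e.exists_rep
    set uu := p₀; set vv := q₀
    have hne : uu ≠ vv := by
      intro h
      exact hdiag _ he (by simpa [Sym2.mk_isDiag_iff] using h)
    set E' : Finset (Sym2 V) := E.erase s(uu, vv) with hE'
    have heE' : s(uu, vv) ∉ E' := Finset.notMem_erase _ _
    have hEE : E = insert s(uu, vv) E' := (Finset.insert_erase he).symm
    set m : Sym2 V → Sym2 {x : V // x ≠ vv} := Sym2.map (wjr hne) with hm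
    rw [hEE, Finset.sum_powerset_insert heE']
    -- rewrite the second sum
    have step : ∀ A ∈ E'.powerset,
        (-1:ℝ) ^ (insert s(uu,vv) A).card *
            lam ^ Nat.card (fromEdgeSet (↑(insert s(uu,vv) A) : Set (Sym2 V))).ConnectedComponent
          = -((-1:ℝ) ^ A.card *
              lam ^ Nat.card (fromEdgeSet
                (↑(A.image m) : Set (Sym2 {x : V // x ≠ vv}))).ConnectedComponent) := by
      intro A hA
      have heA : s(uu,vv) ∉ A := fun hx => heE' (Finset.mem_powerset.mp hA hx)
      rw [Finset.card_insert_of_notMem heA, Finset.coe_insert,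
        wj_contract_card hne (↑A : Set (Sym2 V)), Finset.coe_image, pow_succ]
      ring
    rw [Finset.sum_congr rfl step, Finset.sum_neg_distrib]
    have hcol := wj_collapse m E'
      (fun B => lam ^ Nat.card (fromEdgeSet (↑B : Set (Sym2 {x : V // x ≠ vv}))).ConnectedComponent)
    rw [hcol]
    -- apply the inductive hypotheses
    have hcardE' : E'.card ≤ N := by
      have h6 : E'.card = E.card - 1 := Finset.card_erase_of_mem he
      have h7 : 0 < E.card := Finset.card_pos.mpr ⟨_, he⟩
      omega
    have hdiag' : ∀ e ∈ E', ¬ e.IsDiag := fun e heE => hdiag e (Finset.mem_of_mem_erase heE)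
    have h1 := ih V E' hcardE' hdiag'
    have hFdiag : ∀ f ∈ E'.image m, ¬ f.IsDiag := by
      intro f hf
      obtain ⟨z, hz, rfl⟩ := Finset.mem_image.mp hf
      obtain ⟨⟨p, q⟩, rfl⟩ := z.exists_rep
      rw [hm, Sym2.map_pair_eq, Sym2.mk_isDiag_iff]
      intro hrpq
      have hpq : p ≠ q := fun h => hdiag' _ hz (by simpa [Sym2.mk_isDiag_iff] using h)
      have : s(p,q) = s(uu,vv) := wjr_sym2_eq hne hrpq hpq
      exact (Finset.ne_of_mem_erase hz) this
    have h2 := ih {x : V // x ≠ vv} (E'.image m)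
      (le_trans Finset.card_image_le hcardE') hFdiag
    have hn : Fintype.card V = Fintype.card {x : V // x ≠ vv} + 1 := by
      have h3 : Fintype.card {x : V // ¬ x = vv} = Fintype.card V - Fintype.card {x : V // x = vv} :=
        Fintype.card_subtype_compl _
    
      have h4 : Fintype.card {x : V // x = vv} = 1 := Fintype.card_subtype_eq vv
      have h5 : 0 < Fintype.card V := Fintype.card_pos_iff.mpr ⟨vv⟩
      have : Fintype.card {x : V // x ≠ vv} = Fintype.card {x : V // ¬ x = vv} := rfl
      omega
    set S1 := ∑ A ∈ E'.powerset, (-1:ℝ) ^ A.card *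
      lam ^ Nat.card (fromEdgeSet (↑A : Set (Sym2 V))).ConnectedComponent
    set T := ∑ A ∈ (E'.image m).powerset, (-1:ℝ) ^ A.card *
      lam ^ Nat.card (fromEdgeSet (↑A : Set (Sym2 {x : V // x ≠ vv}))).ConnectedComponent
    have hkey : (-1:ℝ) ^ Fintype.card V * (S1 + -T)
        = (-1:ℝ) ^ Fintype.card V * S1 + (-1:ℝ) ^ Fintype.card {x : V // x ≠ vv} * T := by
      rw [hn]; ring
    rw [hkey]
    exact add_pos h1 h2

end lemmas

/-- The (real-valued) chromatic polynomial of a simple graph `G` (Whitney rank expansion). -/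
noncomputable def chromPolyR {V : Type*} [Fintype V] (G : SimpleGraph V) (x : ℝ) : ℝ :=
  ∑ A ∈ (Set.toFinite G.edgeSet).toFinset.powerset,
    (-1 : ℝ) ^ A.card *
      x ^ Nat.card (SimpleGraph.fromEdgeSet (↑A : Set (Sym2 V))).ConnectedComponent

/-- Woodall–Jackson, part (i): for a loopless graph `G` on `n` vertices
and any real `λ < 0`, `P_G(λ) ≠ 0` and its sign is `(−1)^n`. -/
theorem stmt16 {V : Type*} [Fintype V] (G : SimpleGraph V)
    (lam : ℝ) (hlam : lam < 0) :
    chromPolyR G lam ≠ 0 ∧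
    0 < (-1 : ℝ) ^ (Fintype.card V) * chromPolyR G lam := by
  have hdiag : ∀ e ∈ (Set.toFinite G.edgeSet).toFinset, ¬ e.IsDiag := by
    intro e he
    rw [Set.Finite.mem_toFinset] at he
    exact G.not_isDiag_of_mem_edgeSet he
  have hpos := wj_key lam hlam ((Set.toFinite G.edgeSet).toFinset.card) V
    (Set.toFinite G.edgeSet).toFinset le_rfl hdiag
  have hpos' : 0 < (-1 : ℝ) ^ (Fintype.card V) * chromPolyR G lam := hpos
  refine ⟨fun h0 => ?_, hpos'⟩
  rw [h0, mul_zero] at hpos'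
  exact lt_irrefl 0 hpos'
end

section
/- Let G be a loopless graph with n vertices and κ connected components, and let λ be a real number with 0 < λ < 1. Then P_G(λ) ≠ 0 and the sign of P_G(λ) is (−1)^{n−κ}. -/
open SimpleGraph

section Aux

variable {V : Type*}

private lemma reach_sup_edge {G : SimpleGraph V} {u v a b : V}
    (h : (G ⊔ SimpleGraph.edge u v).Reachable a b) :
    G.Reachable a b ∨ (G.Reachable a u ∧ G.Reachable v b) ∨ (G.Reachable a v ∧ G.Reachable u b) := by
  obtain ⟨w⟩ := h
  induction w with
  | nil => exact Or.inl (Reachable.refl _)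
  | cons hadj p ih =>
    rcases hadj with hG | he
    · rcases ih with h1 | ⟨h1, h2⟩ | ⟨h1, h2⟩
      · exact Or.inl ((Adj.reachable hG).trans h1)
      · exact Or.inr (Or.inl ⟨(Adj.reachable hG).trans h1, h2⟩)
      · exact Or.inr (Or.inr ⟨(Adj.reachable hG).trans h1, h2⟩)
    · rw [edge_adj] at he
      rcases he.1 with ⟨rfl, rfl⟩ | ⟨rfl, rfl⟩
      · rcases ih with h1 | ⟨h1, h2⟩ | ⟨h1, h2⟩
        · exact Or.inr (Or.inl ⟨Reachable.refl _, h1⟩)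
        · exact Or.inr (Or.inl ⟨Reachable.refl _, h2⟩)
        · exact Or.inl h2
      · rcases ih with h1 | ⟨h1, h2⟩ | ⟨h1, h2⟩
        · exact Or.inr (Or.inr ⟨Reachable.refl _, h1⟩)
        · exact Or.inl h2
        · exact Or.inl (h1.symm.trans h2)

private lemma card_cc_le [Finite V] {G H : SimpleGraph V} (h : G ≤ H) :
    Nat.card H.ConnectedComponent ≤ Nat.card G.ConnectedComponent := by
  apply Nat.card_le_card_of_surjective
    (SimpleGraph.ConnectedComponent.map (SimpleGraph.Hom.ofLE h))
  intro C
  refine C.ind (fun w => ?_)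
  exact ⟨G.connectedComponentMk w, rfl⟩

private lemma card_cc_sup_edge_of_reach {G : SimpleGraph V} {u v : V} (h : G.Reachable u v) :
    Nat.card (G ⊔ SimpleGraph.edge u v).ConnectedComponent = Nat.card G.ConnectedComponent := by
  apply Nat.card_congr
  apply Quot.congrRight (r := (G ⊔ SimpleGraph.edge u v).Reachable) (r' := G.Reachable)
  intro a b
  constructor
  · intro hr
    rcases reach_sup_edge hr with h1 | ⟨h1, h2⟩ | ⟨h1, h2⟩
    · exact h1
    · exact (h1.trans h.symm.symm).trans h2
    · exact (h1.trans h.symm).trans h2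
  · exact fun hr => hr.mono le_sup_left

private lemma reach_sup_edge_iff_left {G : SimpleGraph V} {u v a : V} (hne : u ≠ v) :
    (G ⊔ SimpleGraph.edge u v).Reachable a u ↔ G.Reachable a u ∨ G.Reachable a v := by
  have hadj : (G ⊔ SimpleGraph.edge u v).Adj v u := by
    right; rw [edge_adj]; exact ⟨Or.inr ⟨rfl, rfl⟩, hne.symm⟩
  constructor
  · intro hr
    rcases reach_sup_edge hr with h1 | ⟨h1, _⟩ | ⟨h1, _⟩
    · exact Or.inl h1
    · exact Or.inl h1
    · exact Or.inr h1
  · rintro (h1 | h1)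
    · exact h1.mono le_sup_left
    · exact (h1.mono le_sup_left).trans hadj.reachable

private lemma reach_sup_edge_iff_far {G : SimpleGraph V} {u v a w : V} (hne : u ≠ v)
    (hw : ¬ (G ⊔ SimpleGraph.edge u v).Reachable w u) :
    (G ⊔ SimpleGraph.edge u v).Reachable a w ↔ G.Reachable a w := by
  have hadj : (G ⊔ SimpleGraph.edge u v).Adj u v := by
    right; rw [edge_adj]; exact ⟨Or.inl ⟨rfl, rfl⟩, hne⟩
  constructor
  · intro hr
    rcases reach_sup_edge hr with h1 | ⟨_, h2⟩ | ⟨_, h2⟩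
    · exact h1
    · exact absurd ((h2.mono le_sup_left).symm.trans hadj.symm.reachable) hw
    · exact absurd ((h2.mono le_sup_left).symm) hw
  · exact fun hr => hr.mono le_sup_left

private lemma card_cc_sup_edge_of_not_reach [Finite V] {G : SimpleGraph V} {u v : V}
    (hne : u ≠ v) (h : ¬ G.Reachable u v) :
    Nat.card G.ConnectedComponent
      = Nat.card (G ⊔ SimpleGraph.edge u v).ConnectedComponent + 1 := by
  classical
  cases nonempty_fintype V
  set G' := G ⊔ SimpleGraph.edge u v with hG'
  let φ : G.ConnectedComponent → G'.ConnectedComponent :=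
    SimpleGraph.ConnectedComponent.map (SimpleGraph.Hom.ofLE le_sup_left)
  have hφmk : ∀ a, φ (G.connectedComponentMk a) = G'.connectedComponentMk a := fun a => rfl
  haveI : Fintype G.ConnectedComponent := Fintype.ofFinite _
  haveI : Fintype G'.ConnectedComponent := Fintype.ofFinite _
  have hcard : Nat.card G.ConnectedComponent = ∑ c' : G'.ConnectedComponent,
      Nat.card {C : G.ConnectedComponent // φ C = c'} := by
    have h1 := Nat.card_congr (Equiv.sigmaFiberEquiv φ).symm
    rw [h1, Nat.card_eq_fintype_card, Fintype.card_sigma]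
    exact Finset.sum_congr rfl fun c' _ => (Nat.card_eq_fintype_card).symm
  have cu : ∀ c' : G'.ConnectedComponent,
      Nat.card {C : G.ConnectedComponent // φ C = c'}
        = if c' = G'.connectedComponentMk u then 2 else 1 := by
    intro c'
    refine c'.ind (fun w => ?_)
    by_cases hw : G'.Reachable w u
    · have : G'.connectedComponentMk w = G'.connectedComponentMk u :=
        SimpleGraph.ConnectedComponent.sound hw
      rw [this, if_pos rfl]
      have hset : {C : G.ConnectedComponent | φ C = G'.connectedComponentMk u}
          = {G.connectedComponentMk u, G.connectedComponentMk v} := by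
        ext C
        refine C.ind (fun a => ?_)
        simp only [Set.mem_setOf_eq, Set.mem_insert_iff, Set.mem_singleton_iff, hφmk,
          SimpleGraph.ConnectedComponent.eq]
        exact reach_sup_edge_iff_left hne
      have : Nat.card {C : G.ConnectedComponent // φ C = G'.connectedComponentMk u}
          = ({G.connectedComponentMk u, G.connectedComponentMk v} :
              Set G.ConnectedComponent).ncard := by
        rw [← Nat.card_coe_set_eq, ← hset]; rfl
      rw [this, Set.ncard_pair]
      intro heq
      exact h ((SimpleGraph.ConnectedComponent.eq).mp heq)
    · rw [if_neg (fun heq => hw ((SimpleGraph.ConnectedComponent.eq).mp heq))]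
      have hset : {C : G.ConnectedComponent | φ C = G'.connectedComponentMk w}
          = {G.connectedComponentMk w} := by
        ext C
        refine C.ind (fun a => ?_)
        simp only [Set.mem_setOf_eq, Set.mem_singleton_iff, hφmk,
          SimpleGraph.ConnectedComponent.eq]
        exact reach_sup_edge_iff_far hne hw
      have : Nat.card {C : G.ConnectedComponent // φ C = G'.connectedComponentMk w}
          = ({G.connectedComponentMk w} : Set G.ConnectedComponent).ncard := by
        rw [← Nat.card_coe_set_eq, ← hset]; rfl
      rw [this, Set.ncard_singleton]
  rw [hcard, Finset.sum_congr rfl (fun c' _ => cu c')]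
  have hsplit : ∀ c' : G'.ConnectedComponent,
      (if c' = G'.connectedComponentMk u then 2 else 1)
        = 1 + (if c' = G'.connectedComponentMk u then 1 else 0) := by
    intro c'; split <;> rfl
  rw [Finset.sum_congr rfl (fun c' _ => hsplit c'), Finset.sum_add_distrib,
    Finset.sum_ite_eq' Finset.univ, if_pos (Finset.mem_univ _), Finset.sum_const,
    Finset.card_univ, Nat.card_eq_fintype_card, smul_eq_mul, mul_one]

/-- Number of connected components of the graph spanned by an edge finset. -/
private noncomputable def ccN (S : Finset (Sym2 V)) : ℕ :=
  Nat.card (SimpleGraph.fromEdgeSet (↑S : Set (Sym2 V))).ConnectedComponent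

/-- Whitney-style sum with a set `B` of contracted edges. -/
private noncomputable def WW [DecidableEq (Sym2 V)] (E B : Finset (Sym2 V)) (x : ℝ) : ℝ :=
  ∑ A ∈ E.powerset, (-1 : ℝ) ^ A.card * x ^ ccN (A ∪ B)

private lemma fromEdgeSet_insert' (e : Sym2 V) (u v : V) (he : e = s(u, v))
    (S : Finset (Sym2 V)) [DecidableEq (Sym2 V)] :
    SimpleGraph.fromEdgeSet (↑(insert e S) : Set (Sym2 V))
      = SimpleGraph.fromEdgeSet (↑S : Set (Sym2 V)) ⊔ SimpleGraph.edge u v := by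
  rw [Finset.coe_insert, Set.insert_eq, fromEdgeSet_union, he, sup_comm]
  rfl

private lemma ccN_insert_of_reach [Finite V] [DecidableEq (Sym2 V)] {u v : V}
    {S : Finset (Sym2 V)}
    (h : (SimpleGraph.fromEdgeSet (↑S : Set (Sym2 V))).Reachable u v) :
    ccN (insert s(u, v) S) = ccN S := by
  rw [ccN, fromEdgeSet_insert' _ u v rfl S]
  exact card_cc_sup_edge_of_reach h

private lemma ccN_insert_of_not_reach [Finite V] [DecidableEq (Sym2 V)] {u v : V}
    {S : Finset (Sym2 V)}
    (h : ¬ (SimpleGraph.fromEdgeSet (↑S : Set (Sym2 V))).Reachable u v) :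
    ccN S = ccN (insert s(u, v) S) + 1 := by
  have hne : u ≠ v := by rintro rfl; exact h (Reachable.refl _)
  rw [ccN, ccN, fromEdgeSet_insert' _ u v rfl S]
  exact card_cc_sup_edge_of_not_reach hne h

private lemma ccN_mono [Finite V] {B S : Finset (Sym2 V)} (h : B ⊆ S) : ccN S ≤ ccN B :=
  card_cc_le (fromEdgeSet_mono (by exact_mod_cast h))

/-- The vanishing lemma: if some edge of `E` has its endpoints joined in `B`,
the alternating sum vanishes. -/
private lemma WW_eq_zero [Finite V] [DecidableEq (Sym2 V)] {E B : Finset (Sym2 V)} {x : ℝ}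
    (hbad : ∃ e ∈ E, ∃ u v, e = s(u, v) ∧
      (SimpleGraph.fromEdgeSet (↑B : Set (Sym2 V))).Reachable u v) :
    WW E B x = 0 := by
  classical
  obtain ⟨e, he, u, v, rfl, hreach⟩ := hbad
  have hE : E = insert s(u, v) (E.erase s(u, v)) := (Finset.insert_erase he).symm
  rw [WW, hE, Finset.sum_powerset_insert (Finset.notMem_erase _ _)]
  have hterm : ∀ A ∈ (E.erase s(u, v)).powerset,
      (-1 : ℝ) ^ (insert s(u, v) A).card * x ^ ccN (insert s(u, v) A ∪ B)
        = -((-1 : ℝ) ^ A.card * x ^ ccN (A ∪ B)) := by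
    intro A hA
    have heA : s(u, v) ∉ A :=
      fun hc => Finset.notMem_erase _ _ (Finset.mem_powerset.mp hA hc)
    have hcard : (insert s(u, v) A).card = A.card + 1 := Finset.card_insert_of_notMem heA
    have hcc : ccN (insert s(u, v) A ∪ B) = ccN (A ∪ B) := by
      have : insert s(u, v) A ∪ B = insert s(u, v) (A ∪ B) := by
        ext y; simp [Finset.mem_insert, Finset.mem_union, or_assoc]
      rw [this]
      exact ccN_insert_of_reach (hreach.mono (fromEdgeSet_mono (by
        intro y hy
        simp only [Finset.coe_union, Set.mem_union]
        exact Or.inr hy)))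
    rw [hcard, hcc, pow_succ]
    ring
  rw [Finset.sum_congr rfl hterm, Finset.sum_neg_distrib]
  ring

private lemma WW_pos [Finite V] [DecidableEq (Sym2 V)] {x : ℝ} (h0 : 0 < x) (h1 : x < 1) (E : Finset (Sym2 V)) :
    ∀ B : Finset (Sym2 V),
      (∀ e ∈ E, ∀ u v : V, e = s(u, v) →
        ¬ (SimpleGraph.fromEdgeSet (↑B : Set (Sym2 V))).Reachable u v) →
      0 < (-1 : ℝ) ^ (ccN B - ccN (E ∪ B)) * WW E B x := by
  classical
  induction E using Finset.induction_on with
  | empty =>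
    intro B _
    rw [WW, Finset.powerset_empty, Finset.sum_singleton]
    simp only [Finset.card_empty, pow_zero, one_mul, Finset.empty_union, Nat.sub_self]
    positivity
  | @insert e s he ih =>
    intro B hyp
    obtain ⟨u, v⟩ := e
    have hnrB : ¬ (SimpleGraph.fromEdgeSet (↑B : Set (Sym2 V))).Reachable u v :=
      hyp _ (Finset.mem_insert_self _ _) u v rfl
    have hyp_s : ∀ f ∈ s, ∀ p q : V, f = s(p, q) →
        ¬ (SimpleGraph.fromEdgeSet (↑B : Set (Sym2 V))).Reachable p q :=
      fun f hf => hyp f (Finset.mem_insert_of_mem hf)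
    have hsum : WW (insert s(u, v) s) B x = WW s B x - WW s (insert s(u, v) B) x := by
      rw [WW, Finset.sum_powerset_insert he]
      have hterm : ∀ A ∈ s.powerset,
          (-1 : ℝ) ^ (insert s(u, v) A).card * x ^ ccN (insert s(u, v) A ∪ B)
            = -((-1 : ℝ) ^ A.card * x ^ ccN (A ∪ insert s(u, v) B)) := by
        intro A hA
        have heA : s(u, v) ∉ A := fun hc => he (Finset.mem_powerset.mp hA hc)
        have h1 : insert s(u, v) A ∪ B = A ∪ insert s(u, v) B := by
          ext y
          simp only [Finset.mem_union, Finset.mem_insert]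
          tauto
        rw [Finset.card_insert_of_notMem heA, h1, pow_succ]
        ring
      rw [Finset.sum_congr rfl hterm, Finset.sum_neg_distrib, WW, WW]
      ring
    have hsub : insert s(u, v) s ∪ B = insert s(u, v) (s ∪ B) := by
      ext y
      simp only [Finset.mem_union, Finset.mem_insert]
      tauto
    have hc2c1 : ccN (s ∪ B) ≤ ccN B := ccN_mono Finset.subset_union_right
    by_cases hbr : (SimpleGraph.fromEdgeSet (↑(s ∪ B) : Set (Sym2 V))).Reachable u v
    · -- non-bridge case
      have hccE : ccN (insert s(u, v) s ∪ B) = ccN (s ∪ B) := by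
        rw [hsub]; exact ccN_insert_of_reach hbr
      have ih1 := ih B hyp_s
      by_cases hbad : ∃ f ∈ s, ∃ p q : V, f = s(p, q) ∧
          (SimpleGraph.fromEdgeSet (↑(insert s(u, v) B) : Set (Sym2 V))).Reachable p q
      · rw [hsum, WW_eq_zero hbad, sub_zero, hccE]
        exact ih1
      · push_neg at hbad
        have ih2 := ih (insert s(u, v) B) hbad
        have hc1 : ccN B = ccN (insert s(u, v) B) + 1 := ccN_insert_of_not_reach hnrB
        have hsB : s ∪ insert s(u, v) B = insert s(u, v) (s ∪ B) := by
          ext y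
          simp only [Finset.mem_union, Finset.mem_insert]
          tauto
        have hc2' : ccN (s ∪ insert s(u, v) B) = ccN (s ∪ B) := by
          rw [hsB]; exact ccN_insert_of_reach hbr
        have hle : ccN (s ∪ B) ≤ ccN (insert s(u, v) B) := by
          rw [← hc2']
          exact ccN_mono Finset.subset_union_right
        set k2 := ccN (insert s(u, v) B) - ccN (s ∪ insert s(u, v) B) with hk2
        have hk : ccN B - ccN (insert s(u, v) s ∪ B) = k2 + 1 := by
          rw [hccE, hk2, hc2']
          omega
        rw [hsum, hk]
        have expand : (-1 : ℝ) ^ (k2 + 1) * (WW s B x - WW s (insert s(u, v) B) x)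
            = (-1) ^ (k2 + 1) * WW s B x + (-1) ^ k2 * WW s (insert s(u, v) B) x := by
          rw [pow_succ]; ring
        rw [expand]
        have hkk : ccN B - ccN (s ∪ B) = k2 + 1 := by rw [hk2, hc2']; omega
        rw [hkk] at ih1
        linarith
    · -- bridge case
      have hccE : ccN (s ∪ B) = ccN (insert s(u, v) s ∪ B) + 1 := by
        rw [hsub]; exact ccN_insert_of_not_reach hbr
      have ih1 := ih B hyp_s
      have hxw : x * WW s (insert s(u, v) B) x = WW s B x := by
        rw [WW, WW, Finset.mul_sum]
        refine Finset.sum_congr rfl (fun A hA => ?_)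
        have hA' : A ⊆ s := Finset.mem_powerset.mp hA
        have hnr : ¬ (SimpleGraph.fromEdgeSet (↑(A ∪ B) : Set (Sym2 V))).Reachable u v := by
          intro hr
          exact hbr (hr.mono (fromEdgeSet_mono (by
            intro y hy
            simp only [Finset.coe_union, Set.mem_union] at hy ⊢
            exact hy.imp (fun h => hA' h) id)))
        have hcc : ccN (A ∪ B) = ccN (insert s(u, v) (A ∪ B)) + 1 :=
          ccN_insert_of_not_reach hnr
        have hAiB : A ∪ insert s(u, v) B = insert s(u, v) (A ∪ B) := by
          ext y
          simp only [Finset.mem_union, Finset.mem_insert]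
          tauto
        rw [hAiB, hcc, pow_succ]
        ring
      set k := ccN B - ccN (s ∪ B) with hkdef
      have hk : ccN B - ccN (insert s(u, v) s ∪ B) = k + 1 := by omega
      rw [hsum, hk]
      set W2 := WW s (insert s(u, v) B) x with hW2
      have h2 : 0 < (-1 : ℝ) ^ k * W2 := by
        have h3 := mul_pos ih1 (inv_pos.mpr h0)
        rw [← hxw] at h3
        rwa [show ((-1 : ℝ) ^ k * (x * W2)) * x⁻¹ = (-1) ^ k * W2 * (x * x⁻¹) from by ring,
          mul_inv_cancel₀ h0.ne', mul_one] at h3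
      have key : (-1 : ℝ) ^ (k + 1) * (WW s B x - W2)
          = (-1) ^ k * W2 - (-1) ^ k * WW s B x := by
        rw [pow_succ]; ring
      rw [key, ← hxw]
      nlinarith [h2, h1, h0]

end Aux

/-- Woodall–Jackson, part (ii): for a loopless graph `G` on `n` vertices
with `κ` connected components and any real `0 < λ < 1`, `P_G(λ) ≠ 0` and its sign is
`(−1)^{n−κ}`. -/
theorem stmt17 {V : Type*} [Fintype V] (G : SimpleGraph V)
    (lam : ℝ) (h0 : 0 < lam) (h1 : lam < 1) :
    chromPolyR G lam ≠ 0 ∧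
    0 < (-1 : ℝ) ^ (Fintype.card V - Nat.card G.ConnectedComponent) * chromPolyR G lam := by
  haveI : DecidableEq (Sym2 V) := Classical.decEq _
  set E := (Set.toFinite G.edgeSet).toFinset with hEdef
  have hW : chromPolyR G lam = WW E ∅ lam := by
    rw [chromPolyR, WW]
    refine Finset.sum_congr rfl fun A hA => ?_
    rw [Finset.union_empty]
    rfl
  have hyp : ∀ e ∈ E, ∀ u v : V, e = s(u, v) →
      ¬ (SimpleGraph.fromEdgeSet ((↑(∅ : Finset (Sym2 V))) : Set (Sym2 V))).Reachable u v := by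
    intro e he u v huv hr
    simp only [Finset.coe_empty, SimpleGraph.fromEdgeSet_empty, SimpleGraph.reachable_bot] at hr
    subst hr
    have hmem : e ∈ G.edgeSet := by
      rwa [hEdef, Set.Finite.mem_toFinset] at he
    rw [huv] at hmem
    exact G.irrefl ((SimpleGraph.mem_edgeSet _).mp hmem)
  have hpos := WW_pos h0 h1 E ∅ hyp
  have hbotcard : ccN (∅ : Finset (Sym2 V)) = Fintype.card V := by
    rw [ccN]
    simp only [Finset.coe_empty, SimpleGraph.fromEdgeSet_empty]
    have : Nat.card (⊥ : SimpleGraph V).ConnectedComponent = Nat.card V := by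
      apply Nat.card_congr
      refine Equiv.trans
        (Quot.congrRight (r := (⊥ : SimpleGraph V).Reachable) (r' := Eq)
          fun a b => SimpleGraph.reachable_bot) ?_
      exact ⟨Quot.lift id fun a b h => h, Quot.mk _, by rintro ⟨a⟩; rfl, fun a => rfl⟩
    rw [this, Nat.card_eq_fintype_card]
  have hEcard : ccN (E ∪ (∅ : Finset (Sym2 V))) = Nat.card G.ConnectedComponent := by
    rw [Finset.union_empty, ccN,
      show ((E : Set (Sym2 V))) = G.edgeSet from Set.Finite.coe_toFinset _,
      SimpleGraph.fromEdgeSet_edgeSet]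
  rw [hbotcard, hEcard] at hpos
  rw [hW]
  refine ⟨fun hz => ?_, hpos⟩
  rw [hz, mul_zero] at hpos
  exact lt_irrefl 0 hpos
end

section
/- Let k ≥ 3 and δ > 0, and choose a positive integer r with k − 1 − δ ≤ (k−1)^{1−1/r}. If |P̂ − P_H(k)| ≤ (1/2)·(k−1−δ)^{nr} and P_H(k) = P_G(k)·(k−1)^{n(r−1)}, then |P̂/(k−1)^{n(r−1)} − P_G(k)| ≤ 1/2; consequently, since P_G(k) is an integer, P_G(k) is the nearest integer to P̂/(k−1)^{n(r−1)}. -/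
/-- let `k ≥ 3`, `0 < δ < k − 1`, and let `r ≥ 1` satisfy
`k − 1 − δ ≤ (k−1)^{1−1/r}`.  If `P̂` approximates `P_H(k)` to within
`(1/2)(k−1−δ)^{nr}` and `P_H(k) = P_G(k)(k−1)^{n(r−1)}`, then
`|P̂/(k−1)^{n(r−1)} − P_G(k)| ≤ 1/2`; consequently `P_G(k)` is a nearest integer to
`P̂/(k−1)^{n(r−1)}`. -/
theorem stmt19 (k : ℕ) (hk : 3 ≤ k) (δ : ℝ) (hδ0 : 0 < δ) (hδk : δ < (k : ℝ) - 1)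
    (r : ℕ) (hr : 0 < r)
    (hrδ : (k : ℝ) - 1 - δ ≤ ((k : ℝ) - 1) ^ ((1 : ℝ) - 1 / (r : ℝ)))
    (n : ℕ) (hn : 0 < n) (Phat : ℝ) (PG PH : ℤ)
    (hPH : (PH : ℝ) = (PG : ℝ) * ((k : ℝ) - 1) ^ (n * (r - 1)))
    (happrox : |Phat - (PH : ℝ)| ≤ (1 / 2) * ((k : ℝ) - 1 - δ) ^ (n * r)) :
    |Phat / ((k : ℝ) - 1) ^ (n * (r - 1)) - (PG : ℝ)| ≤ 1 / 2 ∧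
    ∀ z : ℤ, z ≠ PG →
      |Phat / ((k : ℝ) - 1) ^ (n * (r - 1)) - (PG : ℝ)|
        ≤ |Phat / ((k : ℝ) - 1) ^ (n * (r - 1)) - (z : ℝ)| := by
  set K : ℝ := (k : ℝ) - 1 with hK
  have hK2 : (2 : ℝ) ≤ K := by
    have : (3 : ℝ) ≤ (k : ℝ) := by exact_mod_cast hk
    simp [hK]; linarith
  have hK0 : 0 < K := by linarith
  have hKδ0 : 0 ≤ K - δ := by linarith
  -- key inequality : (K - δ)^(n*r) ≤ K^(n*(r-1))
  have hkey : (K - δ) ^ (n * r) ≤ K ^ (n * (r - 1)) := by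
    calc (K - δ) ^ (n * r) ≤ (K ^ ((1 : ℝ) - 1 / (r : ℝ))) ^ (n * r) :=
          pow_le_pow_left₀ hKδ0 hrδ _
      _ = K ^ (((1 : ℝ) - 1 / (r : ℝ)) * (n * r)) := by
          rw [← Real.rpow_natCast (K ^ ((1 : ℝ) - 1 / (r : ℝ))) (n * r),
            ← Real.rpow_mul hK0.le]
          push_cast
          ring_nf
      _ = K ^ (((n * (r - 1) : ℕ) : ℝ)) := by
          congr 1
          have hr' : (r : ℝ) ≠ 0 := by positivity
          have hr1 : ((r - 1 : ℕ) : ℝ) = (r : ℝ) - 1 := by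
            push_cast [Nat.cast_sub hr]; ring
          push_cast [hr1]
          field_simp
      _ = K ^ (n * (r - 1)) := Real.rpow_natCast _ _
  have hKm0 : (0 : ℝ) < K ^ (n * (r - 1)) := by positivity
  have hmain : |Phat / K ^ (n * (r - 1)) - (PG : ℝ)| ≤ 1 / 2 := by
    have h1 : Phat / K ^ (n * (r - 1)) - (PG : ℝ)
        = (Phat - (PH : ℝ)) / K ^ (n * (r - 1)) := by
      rw [hPH]; field_simp
    rw [h1, abs_div, abs_of_pos hKm0, div_le_iff₀ hKm0]
    calc |Phat - (PH : ℝ)| ≤ (1 / 2) * (K - δ) ^ (n * r) := happrox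
      _ ≤ (1 / 2) * K ^ (n * (r - 1)) := by linarith
      _ = 1 / 2 * K ^ (n * (r - 1)) := rfl
  refine ⟨hmain, fun z hz => ?_⟩
  have h1 : (1 : ℝ) ≤ |(PG : ℝ) - (z : ℝ)| := by
    have : (1 : ℤ) ≤ |PG - z| := Int.one_le_abs (sub_ne_zero.mpr (Ne.symm hz))
    calc (1 : ℝ) ≤ ((|PG - z| : ℤ) : ℝ) := by exact_mod_cast this
      _ = |(PG : ℝ) - (z : ℝ)| := by push_cast; ring_nf
  have htri : |(PG : ℝ) - (z : ℝ)| ≤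
      |Phat / K ^ (n * (r - 1)) - (PG : ℝ)| + |Phat / K ^ (n * (r - 1)) - (z : ℝ)| := by
    have := abs_sub (Phat / K ^ (n * (r - 1)) - (PG : ℝ)) (Phat / K ^ (n * (r - 1)) - (z : ℝ))
    calc |(PG : ℝ) - (z : ℝ)|
        = |(Phat / K ^ (n * (r - 1)) - (z : ℝ)) - (Phat / K ^ (n * (r - 1)) - (PG : ℝ))| := by
          ring_nf
      _ ≤ _ := by
          rw [add_comm]
          exact (abs_sub _ _).trans_eq rfl
  linarith
end
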